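/- Let Θ be a nonempty set with a distinguished point θ₀, let B ⊆ Θ be nonempty, and fix k ≥ 1, C > 0, λ̄ ≥ 1. Let ξ ∈ ℝ^k with ‖ξ‖ ≤ C; let h, m : Θ → ℝ^k with sup_{θ∈B}‖m(θ)‖ ≤ C and sup_{θ∈B}‖h(θ) − m(θ)‖ ≤ C; let Σ : Θ×Θ → ℝ^{k×k} be such that Σ(θ,θ) is symmetric with all eigenvalues in [1/λ̄, λ̄] for every θ and ‖Σ(θ,θ₀)‖_op ≤ λ̄ for all θ; write Σ₀ = Σ(θ₀,θ₀). Define Q₁(θ) = (Σ(θ,θ₀)Σ₀^{-1}ξ + h(θ))'Σ(θ,θ)^{-1}(Σ(θ,θ₀)Σ₀^{-1}ξ + h(θ)) and Q₂(θ) = (ξ + m(θ))'Σ₀^{-1}(ξ + m(θ)). Then there exists a constant K depending only on C, λ̄ and k such that |inf_{θ∈B} Q₁(θ) − inf_{θ∈B} Q₂(θ)| ≤ K (sup_{θ∈B}‖h(θ) − m(θ)‖ + sup_{θ∈B}‖Σ(θ,θ) − Σ₀‖_op + sup_{θ∈B}‖Σ(θ,θ₀) − Σ₀‖_op). -/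

import Mathlib

open Matrix

/-- Euclidean norm of a vector in `ℝ^k`. -/
noncomputable def euclNorm {k : ℕ} (x : Fin k → ℝ) : ℝ :=
  Real.sqrt (∑ i, x i ^ 2)

/-- Euclidean operator norm of a `k×k` real matrix. -/
noncomputable def opNorm {k : ℕ} (A : Matrix (Fin k) (Fin k) ℝ) : ℝ :=
  sSup {r : ℝ | ∃ x : Fin k → ℝ, euclNorm x ≤ 1 ∧ r = euclNorm (A.mulVec x)}

/-- The criterion `Q₁(θ) = (Σ(θ,θ₀)Σ₀⁻¹ξ + h(θ))'Σ(θ,θ)⁻¹(Σ(θ,θ₀)Σ₀⁻¹ξ + h(θ))`. -/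
noncomputable def critQ1 {k : ℕ} {Θ : Type*} (θ₀ : Θ) (ξ : Fin k → ℝ)
    (h : Θ → Fin k → ℝ) (S : Θ → Θ → Matrix (Fin k) (Fin k) ℝ) (θ : Θ) : ℝ :=
  ((S θ θ₀ * (S θ₀ θ₀)⁻¹).mulVec ξ + h θ) ⬝ᵥ
    (S θ θ)⁻¹.mulVec ((S θ θ₀ * (S θ₀ θ₀)⁻¹).mulVec ξ + h θ)

/-- The simplified criterion `Q₂(θ) = (ξ + m(θ))'Σ₀⁻¹(ξ + m(θ))`. -/
noncomputable def critQ2 {k : ℕ} {Θ : Type*} (θ₀ : Θ) (ξ : Fin k → ℝ)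
    (m : Θ → Fin k → ℝ) (S : Θ → Θ → Matrix (Fin k) (Fin k) ℝ) (θ : Θ) : ℝ :=
  (ξ + m θ) ⬝ᵥ (S θ₀ θ₀)⁻¹.mulVec (ξ + m θ)

set_option maxHeartbeats 1000000
set_option synthInstance.maxHeartbeats 400000

namespace StmtAux

variable {k : ℕ}

lemma euclNorm_eq (x : Fin k → ℝ) :
    euclNorm x = ‖(WithLp.equiv 2 (Fin k → ℝ)).symm x‖ := by
  rw [EuclideanSpace.norm_eq]
  simp [euclNorm, Real.norm_eq_abs, sq_abs]

lemma euclNorm_nonneg (x : Fin k → ℝ) : 0 ≤ euclNorm x := Real.sqrt_nonneg _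

lemma euclNorm_neg (x : Fin k → ℝ) : euclNorm (-x) = euclNorm x := by
  simp [euclNorm, Pi.neg_apply]

lemma euclNorm_add_le (x y : Fin k → ℝ) :
    euclNorm (x + y) ≤ euclNorm x + euclNorm y := by
  simp only [euclNorm_eq]
  rw [show (WithLp.equiv 2 (Fin k → ℝ)).symm (x + y)
      = (WithLp.equiv 2 (Fin k → ℝ)).symm x + (WithLp.equiv 2 (Fin k → ℝ)).symm y from rfl]
  exact norm_add_le _ _

lemma abs_dot_le (x y : Fin k → ℝ) : |x ⬝ᵥ y| ≤ euclNorm x * euclNorm y := by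
  have h := abs_real_inner_le_norm ((WithLp.equiv 2 (Fin k → ℝ)).symm x)
    ((WithLp.equiv 2 (Fin k → ℝ)).symm y)
  have h2 : (inner ℝ ((WithLp.equiv 2 (Fin k → ℝ)).symm x)
      ((WithLp.equiv 2 (Fin k → ℝ)).symm y) : ℝ) = x ⬝ᵥ y := by
    simp [PiLp.inner_apply, dotProduct, WithLp.equiv_symm_apply, mul_comm]
  rw [h2] at h
  simpa [euclNorm_eq] using h

lemma dot_self_eq (x : Fin k → ℝ) : x ⬝ᵥ x = euclNorm x ^ 2 := by
  rw [euclNorm, Real.sq_sqrt (by positivity)]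
  simp [dotProduct, sq]

lemma toEuclideanCLM_piLp_equiv_symm (A : Matrix (Fin k) (Fin k) ℝ) (x : Fin k → ℝ) :
    Matrix.toEuclideanCLM (𝕜 := ℝ) A ((WithLp.equiv 2 (Fin k → ℝ)).symm x)
      = (WithLp.equiv 2 (Fin k → ℝ)).symm (Matrix.toLin' A x) := rfl

lemma opNorm_eq (A : Matrix (Fin k) (Fin k) ℝ) :
    opNorm A = ‖Matrix.toEuclideanCLM (𝕜 := ℝ) A‖ := by
  rw [← ContinuousLinearMap.sSup_unitClosedBall_eq_norm]
  refine congrArg sSup (Set.ext fun r => ?_)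
  constructor
  · rintro ⟨x, hx, rfl⟩
    refine ⟨(WithLp.equiv 2 (Fin k → ℝ)).symm x, ?_, ?_⟩
    · rw [Metric.mem_closedBall, dist_zero_right, ← euclNorm_eq]; exact hx
    · simp only [toEuclideanCLM_piLp_equiv_symm, Matrix.toLin'_apply, euclNorm_eq]
  · rintro ⟨x, hx, rfl⟩
    refine ⟨WithLp.equiv 2 (Fin k → ℝ) x, ?_, ?_⟩
    · rw [euclNorm_eq, Equiv.symm_apply_apply]
      rw [Metric.mem_closedBall, dist_zero_right] at hx; exact hx
    · have : x = (WithLp.equiv 2 (Fin k → ℝ)).symm (WithLp.equiv 2 (Fin k → ℝ) x) :=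
        (Equiv.symm_apply_apply _ _).symm
      rw [euclNorm_eq, ← Matrix.toLin'_apply, ← toEuclideanCLM_piLp_equiv_symm,
        ← this]

lemma opNorm_nonneg (A : Matrix (Fin k) (Fin k) ℝ) : 0 ≤ opNorm A := by
  rw [opNorm_eq]; exact norm_nonneg _

lemma euclNorm_mulVec_le (A : Matrix (Fin k) (Fin k) ℝ) (x : Fin k → ℝ) :
    euclNorm (A.mulVec x) ≤ opNorm A * euclNorm x := by
  rw [opNorm_eq, euclNorm_eq, euclNorm_eq]
  have h := (Matrix.toEuclideanCLM (𝕜 := ℝ) A).le_opNorm ((WithLp.equiv 2 (Fin k → ℝ)).symm x)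
  simpa [toEuclideanCLM_piLp_equiv_symm, Matrix.toLin'_apply] using h

lemma posSemidef_sub_smul {A : Matrix (Fin k) (Fin k) ℝ} (hA : A.IsHermitian) {c : ℝ}
    (hc : ∀ i, c ≤ hA.eigenvalues i) : (A - c • 1).PosSemidef := by
  set U := (hA.eigenvectorUnitary : Matrix (Fin k) (Fin k) ℝ) with hU
  have hUU : U * star U = 1 := (Matrix.mem_unitaryGroup_iff).mp (hA.eigenvectorUnitary).2
  have hspec : A = U * diagonal hA.eigenvalues * star U := by
    have h := hA.spectral_theorem
    simpa [RCLike.ofReal_real_eq_id] using h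
  have hkey : A - c • 1 = U * diagonal (fun i => hA.eigenvalues i - c) * star U := by
    have h1 : U * (c • (1 : Matrix (Fin k) (Fin k) ℝ)) * star U = c • 1 := by
      rw [mul_smul_comm, smul_mul_assoc, mul_one, hUU]
    calc A - c • 1 = U * diagonal hA.eigenvalues * star U - U * (c • 1) * star U := by
          rw [h1, ← hspec]
      _ = U * (diagonal hA.eigenvalues - c • 1) * star U := by
          rw [← sub_mul, ← mul_sub]
      _ = _ := by rw [smul_one_eq_diagonal, diagonal_sub]
  rw [hkey, Matrix.star_eq_conjTranspose]
  exact (Matrix.PosSemidef.diagonal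
    (Pi.le_def.mpr fun i => sub_nonneg.2 (hc i))).mul_mul_conjTranspose_same U

lemma form_lower {A : Matrix (Fin k) (Fin k) ℝ} (hA : A.IsHermitian) {c : ℝ}
    (hc : ∀ i, c ≤ hA.eigenvalues i) (x : Fin k → ℝ) :
    c * euclNorm x ^ 2 ≤ x ⬝ᵥ A.mulVec x := by
  have h := (posSemidef_sub_smul hA hc).dotProduct_mulVec_nonneg x
  have hst : star x = x := by funext i; simp
  rw [hst, sub_mulVec, dotProduct_sub, Matrix.smul_mulVec, one_mulVec,
    dotProduct_smul, smul_eq_mul, dot_self_eq] at h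
  linarith

lemma isUnit_det' {A : Matrix (Fin k) (Fin k) ℝ} (hA : A.IsHermitian) {c : ℝ} (hcpos : 0 < c)
    (hc : ∀ i, c ≤ hA.eigenvalues i) : IsUnit A.det := by
  rw [hA.det_eq_prod_eigenvalues]
  refine isUnit_iff_ne_zero.mpr (ne_of_gt (Finset.prod_pos fun i _ => ?_))
  simpa [RCLike.ofReal_real_eq_id] using lt_of_lt_of_le hcpos (hc i)

lemma inv_mulVec_le {lam : ℝ} (hlam : 1 ≤ lam) {A : Matrix (Fin k) (Fin k) ℝ}
    (hA : A.IsHermitian) (he : ∀ i, hA.eigenvalues i ∈ Set.Icc (1/lam) lam) (x : Fin k → ℝ) :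
    euclNorm (A⁻¹.mulVec x) ≤ lam * euclNorm x := by
  have hlam0 : 0 < lam := lt_of_lt_of_le one_pos hlam
  have hdet : IsUnit A.det := isUnit_det' hA (by positivity) (fun i => (he i).1)
  set y := A⁻¹.mulVec x with hy
  have hAy : A.mulVec y = x := by
    rw [hy, mulVec_mulVec, Matrix.mul_nonsing_inv _ hdet, one_mulVec]
  have h1 : (1/lam) * euclNorm y ^ 2 ≤ y ⬝ᵥ A.mulVec y := form_lower hA (fun i => (he i).1) y
  have h2 : y ⬝ᵥ A.mulVec y ≤ euclNorm y * euclNorm x := by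
    rw [hAy]; exact (le_abs_self _).trans (abs_dot_le _ _)
  have hy0 := euclNorm_nonneg y
  have hx0 := euclNorm_nonneg x
  have h3 : euclNorm y ^ 2 ≤ lam * (euclNorm y * euclNorm x) := by
    have h4 := mul_le_mul_of_nonneg_left (h1.trans h2) hlam0.le
    calc euclNorm y ^ 2 = lam * ((1/lam) * euclNorm y ^ 2) := by field_simp
      _ ≤ lam * (euclNorm y * euclNorm x) := h4
  rcases eq_or_lt_of_le hy0 with h0 | h0
  · rw [← h0]; exact mul_nonneg hlam0.le hx0
  · nlinarith [h0, h3]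

lemma inv_form_nonneg {lam : ℝ} (hlam : 1 ≤ lam) {A : Matrix (Fin k) (Fin k) ℝ}
    (hA : A.IsHermitian) (he : ∀ i, hA.eigenvalues i ∈ Set.Icc (1/lam) lam) (x : Fin k → ℝ) :
    0 ≤ x ⬝ᵥ A⁻¹.mulVec x := by
  have hlam0 : 0 < lam := lt_of_lt_of_le one_pos hlam
  have hdet : IsUnit A.det := isUnit_det' hA (by positivity) (fun i => (he i).1)
  set y := A⁻¹.mulVec x with hy
  have hAy : A.mulVec y = x := by
    rw [hy, mulVec_mulVec, Matrix.mul_nonsing_inv _ hdet, one_mulVec]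
  have h1 : (1/lam) * euclNorm y ^ 2 ≤ y ⬝ᵥ A.mulVec y := form_lower hA (fun i => (he i).1) y
  have h2 : x ⬝ᵥ y = y ⬝ᵥ A.mulVec y := by rw [← hAy, dotProduct_comm]
  have h3 : 0 ≤ (1/lam) * euclNorm y ^ 2 := by positivity
  rw [h2]; linarith

end StmtAux

open StmtAux in
/-- **Comparison of restricted infima of quadratic criteria (proof of Theorem 2, eq.
(note 4)).**  Under the stated bounds on `ξ`, `m`, `h − m` and the eigenvalue/operator-norm
bounds on `Σ`, there is a constant `K = K(C,λ̄,k)` such that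
`|inf_{θ∈B} Q₁(θ) − inf_{θ∈B} Q₂(θ)| ≤ K (sup_B ‖h−m‖ + sup_B ‖Σ(θ,θ)−Σ₀‖_op +
sup_B ‖Σ(θ,θ₀)−Σ₀‖_op)`. -/
theorem stmt_16 (k : ℕ) (hk : 1 ≤ k) (C lam : ℝ) (hC : 0 < C) (hlam : 1 ≤ lam) :
    ∃ K : ℝ, ∀ (Θ : Type) (B : Set Θ) (θ₀ : Θ), B.Nonempty →
      ∀ (ξ : Fin k → ℝ) (h m : Θ → Fin k → ℝ) (S : Θ → Θ → Matrix (Fin k) (Fin k) ℝ),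
      euclNorm ξ ≤ C →
      (∀ θ ∈ B, euclNorm (m θ) ≤ C) →
      (∀ θ ∈ B, euclNorm (h θ - m θ) ≤ C) →
      (∀ θ : Θ, ∃ hH : (S θ θ).IsHermitian,
        ∀ i, hH.eigenvalues i ∈ Set.Icc (1 / lam) lam) →
      (∀ θ : Θ, opNorm (S θ θ₀) ≤ lam) →
      ∀ Dh DS DS0 : ℝ,
        (∀ θ ∈ B, euclNorm (h θ - m θ) ≤ Dh) →
        (∀ θ ∈ B, opNorm (S θ θ - S θ₀ θ₀) ≤ DS) →
        (∀ θ ∈ B, opNorm (S θ θ₀ - S θ₀ θ₀) ≤ DS0) →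
        |(⨅ θ : B, critQ1 θ₀ ξ h S θ) - (⨅ θ : B, critQ2 θ₀ ξ m S θ)| ≤
          K * (Dh + DS + DS0) := by
  classical
  have hlam0 : (0:ℝ) < lam := lt_of_lt_of_le one_pos hlam
  refine ⟨lam^2*(lam^2*C+2*C)^2 + lam*((lam^2*C+2*C)+2*C)*(lam*C+1), ?_⟩
  intro Θ B θ₀ hB ξ h m S hξ hm hhm hherm hopS Dh DS DS0 hDh hDS hDS0
  set Cv : ℝ := lam^2*C+2*C with hCv
  set K : ℝ := lam^2*Cv^2 + lam*(Cv+2*C)*(lam*C+1) with hK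
  obtain ⟨θb, hθb⟩ := hB
  have hCv0 : 0 ≤ Cv := by
    rw [hCv]; have := sq_nonneg lam
    nlinarith [hC.le]
  have hDh0 : 0 ≤ Dh := (euclNorm_nonneg _).trans (hDh θb hθb)
  have hDSnn : 0 ≤ DS := (opNorm_nonneg _).trans (hDS θb hθb)
  have hDS0nn : 0 ≤ DS0 := (opNorm_nonneg _).trans (hDS0 θb hθb)
  obtain ⟨h0, he0⟩ := hherm θ₀
  have hdet0 : IsUnit (S θ₀ θ₀).det :=
    isUnit_det' h0 (by positivity) (fun i => (he0 i).1)
  have hE0 : 0 ≤ lam*C*DS0 + Dh :=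
    add_nonneg (mul_nonneg (mul_nonneg hlam0.le hC.le) hDS0nn) hDh0
  -- nonnegativity of the criteria
  have q1nn : ∀ θ : Θ, 0 ≤ critQ1 θ₀ ξ h S θ := by
    intro θ
    obtain ⟨hA, heA⟩ := hherm θ
    exact inv_form_nonneg hlam hA heA _
  have q2nn : ∀ θ : Θ, 0 ≤ critQ2 θ₀ ξ m S θ := fun θ => inv_form_nonneg hlam h0 he0 _
  -- pointwise estimate
  have key : ∀ θ ∈ B, |critQ1 θ₀ ξ h S θ - critQ2 θ₀ ξ m S θ| ≤ K * (Dh + DS + DS0) := by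
    intro θ hθ
    obtain ⟨hA, heA⟩ := hherm θ
    have hdetA : IsUnit (S θ θ).det :=
      isUnit_det' hA (by positivity) (fun i => (heA i).1)
    set u : Fin k → ℝ := (S θ₀ θ₀)⁻¹ *ᵥ ξ with hu'
    set v : Fin k → ℝ := (S θ θ₀ * (S θ₀ θ₀)⁻¹) *ᵥ ξ + h θ with hv'
    set w : Fin k → ℝ := ξ + m θ with hw'
    have hZu : (S θ θ₀ * (S θ₀ θ₀)⁻¹) *ᵥ ξ = S θ θ₀ *ᵥ u :=
      (mulVec_mulVec ξ (S θ θ₀) ((S θ₀ θ₀)⁻¹)).symm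
    have hS0u : S θ₀ θ₀ *ᵥ u = ξ := by
      rw [hu', mulVec_mulVec, Matrix.mul_nonsing_inv _ hdet0, one_mulVec]
    have hu : euclNorm u ≤ lam * C :=
      (inv_mulVec_le hlam h0 he0 ξ).trans (mul_le_mul_of_nonneg_left hξ hlam0.le)
    have hvnorm : euclNorm v ≤ Cv := by
      have h1 : v = S θ θ₀ *ᵥ u + ((h θ - m θ) + m θ) := by rw [hv', hZu]; abel
      calc euclNorm v ≤ euclNorm (S θ θ₀ *ᵥ u) + euclNorm ((h θ - m θ) + m θ) := by
            rw [h1]; exact euclNorm_add_le _ _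
        _ ≤ (opNorm (S θ θ₀) * euclNorm u) + (euclNorm (h θ - m θ) + euclNorm (m θ)) :=
            add_le_add (euclNorm_mulVec_le _ _) (euclNorm_add_le _ _)
        _ ≤ (lam * (lam * C)) + (C + C) := by
            refine add_le_add (mul_le_mul (hopS θ) hu (euclNorm_nonneg _)
              (hlam0.le)) (add_le_add (hhm θ hθ) (hm θ hθ))
        _ = Cv := by rw [hCv]; ring
    have hwnorm : euclNorm w ≤ 2*C := by
      calc euclNorm w ≤ euclNorm ξ + euclNorm (m θ) := euclNorm_add_le _ _
        _ ≤ C + C := add_le_add hξ (hm θ hθ)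
        _ = 2*C := by ring
    have hvw : euclNorm (v - w) ≤ lam*C*DS0 + Dh := by
      have h1 : v - w = (S θ θ₀ - S θ₀ θ₀) *ᵥ u + (h θ - m θ) := by
        rw [hv', hw', hZu, sub_mulVec, hS0u]; abel
      calc euclNorm (v - w) ≤ euclNorm ((S θ θ₀ - S θ₀ θ₀) *ᵥ u) + euclNorm (h θ - m θ) := by
            rw [h1]; exact euclNorm_add_le _ _
        _ ≤ opNorm (S θ θ₀ - S θ₀ θ₀) * euclNorm u + Dh :=
            add_le_add (euclNorm_mulVec_le _ _) (hDh θ hθ)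
        _ ≤ DS0 * (lam*C) + Dh :=
            add_le_add_left (mul_le_mul (hDS0 θ hθ) hu (euclNorm_nonneg _) hDS0nn) _
        _ = lam*C*DS0 + Dh := by ring
    have e1 : (S θ θ)⁻¹ *ᵥ v - (S θ₀ θ₀)⁻¹ *ᵥ v
        = (S θ θ)⁻¹ *ᵥ ((S θ₀ θ₀ - S θ θ) *ᵥ ((S θ₀ θ₀)⁻¹ *ᵥ v)) := by
      have i1 : S θ₀ θ₀ *ᵥ ((S θ₀ θ₀)⁻¹ *ᵥ v) = v := by
        rw [mulVec_mulVec, Matrix.mul_nonsing_inv _ hdet0, one_mulVec]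
      have i2 : (S θ θ)⁻¹ *ᵥ (S θ θ *ᵥ ((S θ₀ θ₀)⁻¹ *ᵥ v)) = (S θ₀ θ₀)⁻¹ *ᵥ v := by
        rw [mulVec_mulVec, Matrix.nonsing_inv_mul _ hdetA, one_mulVec]
      rw [sub_mulVec, mulVec_sub, i1, i2]
    have t1 : euclNorm ((S θ θ)⁻¹ *ᵥ v - (S θ₀ θ₀)⁻¹ *ᵥ v) ≤ lam * (DS * (lam * euclNorm v)) := by
      rw [e1]
      refine le_trans (inv_mulVec_le hlam hA heA _) (mul_le_mul_of_nonneg_left ?_ hlam0.le)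
      have hswap : euclNorm ((S θ₀ θ₀ - S θ θ) *ᵥ ((S θ₀ θ₀)⁻¹ *ᵥ v))
          = euclNorm ((S θ θ - S θ₀ θ₀) *ᵥ ((S θ₀ θ₀)⁻¹ *ᵥ v)) := by
        rw [← neg_sub (S θ θ) (S θ₀ θ₀), neg_mulVec, euclNorm_neg]
      rw [hswap]
      exact le_trans (euclNorm_mulVec_le _ _)
        (mul_le_mul (hDS θ hθ) (inv_mulVec_le hlam h0 he0 v) (euclNorm_nonneg _) hDSnn)
    have split : critQ1 θ₀ ξ h S θ - critQ2 θ₀ ξ m S θ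
        = v ⬝ᵥ ((S θ θ)⁻¹ *ᵥ v - (S θ₀ θ₀)⁻¹ *ᵥ v)
          + ((v - w) ⬝ᵥ ((S θ₀ θ₀)⁻¹ *ᵥ v) + w ⬝ᵥ ((S θ₀ θ₀)⁻¹ *ᵥ (v - w))) := by
      show v ⬝ᵥ (S θ θ)⁻¹ *ᵥ v - w ⬝ᵥ (S θ₀ θ₀)⁻¹ *ᵥ w = _
      rw [mulVec_sub, dotProduct_sub, sub_dotProduct, dotProduct_sub]
      ring
    have habs : |critQ1 θ₀ ξ h S θ - critQ2 θ₀ ξ m S θ|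
        ≤ euclNorm v * (lam * (DS * (lam * euclNorm v)))
          + ((lam*C*DS0 + Dh) * (lam * euclNorm v) + (2*C) * (lam * (lam*C*DS0 + Dh))) := by
      rw [split]
      refine le_trans (abs_add_le _ _) (add_le_add ?_ (le_trans (abs_add_le _ _) (add_le_add ?_ ?_)))
      · exact le_trans (abs_dot_le _ _) (mul_le_mul_of_nonneg_left t1 (euclNorm_nonneg v))
      · exact le_trans (abs_dot_le _ _) (mul_le_mul hvw
          ((inv_mulVec_le hlam h0 he0 v).trans (mul_le_mul_of_nonneg_left le_rfl hlam0.le))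
          (euclNorm_nonneg _) hE0)
      · refine le_trans (abs_dot_le _ _) (mul_le_mul hwnorm
          ((inv_mulVec_le hlam h0 he0 (v - w)).trans
            (mul_le_mul_of_nonneg_left hvw hlam0.le))
          (euclNorm_nonneg _) (by linarith [hC.le]))
    have nv0 := euclNorm_nonneg v
    have s1 : euclNorm v * (lam * (DS * (lam * euclNorm v))) ≤ lam^2*Cv^2*DS := by
      have hsq : euclNorm v * euclNorm v ≤ Cv * Cv := mul_le_mul hvnorm hvnorm nv0 hCv0
      have hco : (0:ℝ) ≤ lam^2*DS := mul_nonneg (sq_nonneg lam) hDSnn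
      calc euclNorm v * (lam * (DS * (lam * euclNorm v)))
          = (lam^2*DS) * (euclNorm v * euclNorm v) := by ring
        _ ≤ (lam^2*DS) * (Cv * Cv) := mul_le_mul_of_nonneg_left hsq hco
        _ = lam^2*Cv^2*DS := by ring
    have s2 : (lam*C*DS0 + Dh) * (lam * euclNorm v) ≤ (lam*C*DS0 + Dh) * (lam * Cv) :=
      mul_le_mul_of_nonneg_left (mul_le_mul_of_nonneg_left hvnorm hlam0.le) hE0
    have final : lam^2*Cv^2*DS + ((lam*C*DS0 + Dh) * (lam * Cv) + (2*C) * (lam * (lam*C*DS0 + Dh)))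
        ≤ K * (Dh + DS + DS0) := by
      rw [hK, hCv]
      have h_a : (0:ℝ) ≤ lam*((lam^2*C+2*C)+2*C)*(lam*C+1) := by
        have : (0:ℝ) ≤ (lam^2*C+2*C)+2*C := by nlinarith [sq_nonneg lam, hC.le]
        have : (0:ℝ) ≤ lam*((lam^2*C+2*C)+2*C) := mul_nonneg hlam0.le this
        nlinarith [mul_nonneg (mul_nonneg hlam0.le hC.le) this]
      have h_b : (0:ℝ) ≤ lam^2*(lam^2*C+2*C)^2 + lam*((lam^2*C+2*C)+2*C) := by
        nlinarith [sq_nonneg lam, hC.le, mul_nonneg (sq_nonneg lam) (sq_nonneg (lam^2*C+2*C))]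
      have h_c : (0:ℝ) ≤ lam^2*(lam^2*C+2*C)^2 + lam*((lam^2*C+2*C)+2*C)*(lam*C) := by
        nlinarith [sq_nonneg lam, hC.le, mul_nonneg (sq_nonneg lam) (sq_nonneg (lam^2*C+2*C)),
          mul_nonneg (mul_nonneg hlam0.le (mul_nonneg hlam0.le hC.le)) hC.le]
      nlinarith [mul_nonneg h_a hDSnn, mul_nonneg h_b hDS0nn, mul_nonneg h_c hDh0]
    linarith [habs, s1, s2, final]
  -- from pointwise to infima
  haveI : Nonempty B := ⟨⟨θb, hθb⟩⟩
  have bdd1 : BddBelow (Set.range fun θ : B => critQ1 θ₀ ξ h S θ) :=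
    ⟨0, by rintro r ⟨θ, rfl⟩; exact q1nn θ⟩
  have bdd2 : BddBelow (Set.range fun θ : B => critQ2 θ₀ ξ m S θ) :=
    ⟨0, by rintro r ⟨θ, rfl⟩; exact q2nn θ⟩
  rw [abs_sub_le_iff]
  constructor
  · have h1 : (⨅ θ : B, critQ1 θ₀ ξ h S θ) - K * (Dh + DS + DS0) ≤ ⨅ θ : B, critQ2 θ₀ ξ m S θ := by
      refine le_ciInf fun θ => ?_
      have h2 := ciInf_le bdd1 θ
      have h3 := abs_le.mp (key θ θ.2)
      linarith [h3.2]
    linarith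
  · have h1 : (⨅ θ : B, critQ2 θ₀ ξ m S θ) - K * (Dh + DS + DS0) ≤ ⨅ θ : B, critQ1 θ₀ ξ h S θ := by
      refine le_ciInf fun θ => ?_
      have h2 := ciInf_le bdd2 θ
      have h3 := abs_le.mp (key θ θ.2)
      linarith [h3.1]
    linarith
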